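/- Let X be a finite pure simplicial complex of dimension at least 2, let G be a group acting on a finite nonempty set S, and let φ ∈ C¹(X;G). Then ((|S| − Fix_G(S))/|S|)·‖d₁φ‖ ≤ m_f(Y_φ), where f:Y_φ→X is the projection map. -/

import Mathlib

open Finset

variable {V : Type*} [DecidableEq V]

/-- A finite abstract simplicial complex on vertex type `V`. -/
structure SComplex (V : Type*) [DecidableEq V] where
  faces : Finset (Finset V)
  nonempty_of_mem : ∀ σ ∈ faces, σ.Nonempty
  down_closed : ∀ σ ∈ faces, ∀ τ ⊆ σ, τ.Nonempty → τ ∈ faces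

namespace SComplex

/-- The set `X(k)` of `k`-dimensional simplices (cardinality `k+1`). -/
def simps (X : SComplex V) (k : ℕ) : Finset (Finset V) :=
  X.faces.filter fun σ => σ.card = k + 1

/-- The number of vertices of a top-dimensional face. -/
def rank (X : SComplex V) : ℕ := X.faces.sup Finset.card

/-- The weight `c_X(σ)`. -/
noncomputable def weight (X : SComplex V) (σ : Finset V) : ℝ :=
  (((X.simps (X.rank - 1)).filter fun τ => σ ⊆ τ).card : ℝ) /
    ((X.rank.choose σ.card) * ((X.simps (X.rank - 1)).card))

/-- `X` is pure of dimension `n-1` : every face is contained in a face with `n` vertices. -/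
def IsPureOfRank (X : SComplex V) (n : ℕ) : Prop :=
  X.faces.Nonempty ∧ ∀ σ ∈ X.faces, ∃ τ ∈ X.faces, σ ⊆ τ ∧ τ.card = n

/-- The link `lk(X,σ)`. -/
def lk (X : SComplex V) (σ : Finset V) : SComplex V where
  faces := X.faces.filter fun η => η ∪ σ ∈ X.faces ∧ Disjoint η σ
  nonempty_of_mem := fun η hη => X.nonempty_of_mem η (mem_filter.mp hη).1
  down_closed := by
    intro η hη τ hτη hτ
    rw [mem_filter] at hη ⊢
    refine ⟨X.down_closed η hη.1 τ hτη hτ,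
      X.down_closed (η ∪ σ) hη.2.1 (τ ∪ σ) (union_subset_union_left hτη) ?_,
      hη.2.2.mono_left hτη⟩
    exact hτ.mono subset_union_left

/-- The star `st(X,σ)`. -/
def star (X : SComplex V) (σ : Finset V) : Finset (Finset V) :=
  X.faces.filter fun τ => τ ∪ σ ∈ X.faces

/-- The vertices of `X`. -/
def verts (X : SComplex V) [Fintype V] : Finset V :=
  Finset.univ.filter fun v => ({v} : Finset V) ∈ X.faces

end SComplex
section Cochains

variable {G : Type*} [Group G]

/-- `φ ∈ C¹(X;G)`: an antisymmetric `G`-valued function on ordered pairs. -/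
def IsCochain (G : Type*) [Group G] (φ : V → V → G) : Prop :=
  ∀ u v : V, φ u v = (φ v u)⁻¹

/-- The coboundary `d₁φ(u,v,w) = φ(u,v)φ(v,w)φ(w,u)`. -/
def d1 (φ : V → V → G) (u v w : V) : G := φ u v * φ v w * φ w u

/-- `φ ∈ Z¹(X;G)`: a cochain all of whose triangle equations hold. -/
def IsCocycle (X : SComplex V) (φ : V → V → G) : Prop :=
  IsCochain G φ ∧ ∀ u v w : V, ({u, v, w} : Finset V) ∈ X.simps 2 → d1 φ u v w = 1

open Classical in
/-- The norm `‖φ‖`: total weight of the support of `φ`. -/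
noncomputable def norm1 (X : SComplex V) (φ : V → V → G) : ℝ :=
  ∑ e ∈ (X.simps 1).filter (fun e => ∃ u v : V, e = {u, v} ∧ φ u v ≠ 1), X.weight e

open Classical in
/-- The norm `‖d₁φ‖`: total weight of the 2-simplices whose equation is violated. -/
noncomputable def normD1 (X : SComplex V) (φ : V → V → G) : ℝ :=
  ∑ τ ∈ (X.simps 2).filter (fun τ => ∃ u v w : V, τ = {u, v, w} ∧ d1 φ u v w ≠ 1), X.weight τ

/-- `dist(φ,ψ) = ‖φψ⁻¹‖`. -/
noncomputable def dist1 (X : SComplex V) (φ ψ : V → V → G) : ℝ :=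
  norm1 X (fun u v => φ u v * (ψ u v)⁻¹)

/-- The cosystolic norm `‖φ‖_csy`: the distance from `φ` to `Z¹(X;G)`. -/
noncomputable def csyNorm (X : SComplex V) (φ : V → V → G) : ℝ :=
  sInf {d : ℝ | ∃ ψ : V → V → G, IsCocycle X ψ ∧ d = dist1 X φ ψ}

/-- The cosystolic expansion `h₁(X;G)`. -/
noncomputable def h1 (X : SComplex V) (G : Type*) [Group G] : ℝ :=
  sInf {r : ℝ | ∃ φ : V → V → G, IsCochain G φ ∧ ¬ IsCocycle X φ ∧
    r = normD1 X φ / csyNorm X φ}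

end Cochains

section Fix

variable (G : Type*) [Group G] (S : Type*) [Fintype S] [MulAction G S]

open Classical in
/-- `fix(g) = |{s ∈ S : g•s = s}|`. -/
noncomputable def fixCard (g : G) : ℕ :=
  (Finset.univ.filter fun s : S => g • s = s).card

/-- `Fix_G(S) = max_{g ≠ 1} fix(g)`. -/
noncomputable def FixG : ℕ :=
  sSup {k : ℕ | ∃ g : G, g ≠ 1 ∧ fixCard G S g = k}

end Fix
section Ycomplex

variable {G : Type*} [Group G] {S : Type*} [Fintype S] [DecidableEq S] [MulAction G S]
variable [Fintype V]

open Classical in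
/-- The complex `Y_φ` associated to a cochain `φ`, together with the projection
`Prod.fst : Y_φ → X`. -/
noncomputable def Ycomplex (X : SComplex V) (φ : V → V → G) (S : Type*)
    [Fintype S] [DecidableEq S] [MulAction G S] : SComplex (V × S) where
  faces := Finset.univ.filter fun σ : Finset (V × S) =>
    σ.image Prod.fst ∈ X.faces ∧ (σ.image Prod.fst).card = σ.card ∧
    ∀ p ∈ σ, ∀ q ∈ σ, p.1 ≠ q.1 → p.2 = φ p.1 q.1 • q.2
  nonempty_of_mem := by
    intro σ hσ
    rw [Finset.mem_filter] at hσ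
    exact Finset.image_nonempty.mp (X.nonempty_of_mem _ hσ.2.1)
  down_closed := by
    intro σ hσ τ hτσ hτ
    rw [Finset.mem_filter] at hσ ⊢
    obtain ⟨-, h1, h2, h3⟩ := hσ
    refine ⟨Finset.mem_univ _,
      X.down_closed _ h1 _ (Finset.image_subset_image hτσ) (Finset.image_nonempty.mpr hτ),
      ?_, fun p hp q hq => h3 p (hτσ hp) q (hτσ hq)⟩
    exact Finset.card_image_iff.mpr ((Finset.card_image_iff.mp h2).mono hτσ)

end Ycomplex

section Deficiency

variable {W : Type*} [DecidableEq W] [Fintype W] [Fintype V]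

open Classical in
/-- `D_f(ut)`: the edges in the link of `f(ut)` that are not covered by the image of the
link of `ut`. -/
noncomputable def Dset (Y : SComplex W) (X : SComplex V) (f : W → V) (ut : W) :
    Finset (Finset V) :=
  ((X.lk {f ut}).simps 1).filter fun e => ¬ ∃ η ∈ (Y.lk {ut}).faces, η.image f = e

/-- The local deficiency `μ_f(ut)`. -/
noncomputable def locDef (Y : SComplex W) (X : SComplex V) (f : W → V) (ut : W) : ℝ :=
  ∑ e ∈ Dset Y X f ut, (X.lk {f ut}).weight e

open Classical in
/-- The deficiency `m_f(Y)` of a map `f : Y → X`. -/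
noncomputable def deficiency (Y : SComplex W) (X : SComplex V) (f : W → V) : ℝ :=
  ∑ u ∈ X.verts, (X.weight {u} / ((Y.verts.filter fun w => f w = u).card : ℝ)) *
    ∑ ut ∈ Y.verts.filter (fun w => f w = u), locDef Y X f ut

end Deficiency
section MapOver

variable [Fintype V]

/-- An element of `M(X;G,S)`: a surjective simplicial `|S|`-to-`1` map onto `X` whose
vertex fibers are identified with `S` and whose edge fibers are matchings given by the
action of elements of `G`. -/
structure MapOver (X : SComplex V) (G : Type*) (S : Type*) [Group G] [Fintype S]
    [DecidableEq S] [MulAction G S] [Fintype V] where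
  Y : SComplex (V × S)
  simplicial : ∀ τ ∈ Y.faces, τ.image Prod.fst ∈ X.faces
  injOnFaces : ∀ τ ∈ Y.faces, (τ.image Prod.fst).card = τ.card
  surj : ∀ σ ∈ X.faces, ∃ τ ∈ Y.faces, τ.image Prod.fst = σ
  fiber : ∀ p : V × S, ({p} : Finset (V × S)) ∈ Y.faces ↔ ({p.1} : Finset V) ∈ X.faces
  edges : ∀ u v : V, ({u, v} : Finset V) ∈ X.simps 1 → ∃ g : G,
    ∀ s t : S, (({(u, s), (v, t)} : Finset (V × S)) ∈ Y.faces ↔ s = g • t)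

variable {G : Type*} [Group G] {S : Type*} [Fintype S] [DecidableEq S] [MulAction G S]

open Classical in
/-- The set of edges of `Y` lying over a given edge of the base. -/
noncomputable def edgeFiber (Y : SComplex (V × S)) (e : Finset V) :
    Finset (Finset (V × S)) :=
  (Y.simps 1).filter fun e' => e'.image Prod.fst = e

open Classical in
/-- The distance between two elements of `M(X;G,S)`: the weight of the set of edges of
`X` over which the two edge fibers differ. -/
noncomputable def mdist (X : SComplex V) (M₁ M₂ : MapOver X G S) : ℝ :=
  ∑ e ∈ (X.simps 1).filter (fun e => edgeFiber M₁.Y e ≠ edgeFiber M₂.Y e), X.weight e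

/-- The distance from an element of `M(X;G,S)` to the set `M₀(X;G,S)` of genuine covers. -/
noncomputable def distToCovers (X : SComplex V) (M : MapOver X G S) : ℝ :=
  sInf {d : ℝ | ∃ M' : MapOver X G S, deficiency M'.Y X Prod.fst = 0 ∧ d = mdist X M M'}

/-- The `(G,S)`-cover-stability `c(X;G,S)`. -/
noncomputable def coverStability (X : SComplex V) (G : Type*) (S : Type*) [Group G]
    [Fintype S] [DecidableEq S] [MulAction G S] : ℝ :=
  sInf {r : ℝ | ∃ M : MapOver X G S, deficiency M.Y X Prod.fst ≠ 0 ∧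
    r = deficiency M.Y X Prod.fst / distToCovers X M}

end MapOver
section Paths

/-- A (possibly closed) edge path in a complex: consecutive vertices span edges. -/
def IsEdgePath (K : SComplex V) (p : List V) : Prop :=
  (∀ v ∈ p, ({v} : Finset V) ∈ K.faces) ∧
    p.Chain' fun u v => ({u, v} : Finset V) ∈ K.faces

/-- Combinatorial homotopy of edge paths, generated by erasing repetitions and by
collapsing across simplices. -/
inductive Homotopic (K : SComplex V) : List V → List V → Prop
  | refl (p : List V) : Homotopic K p p
  | symm {p q : List V} : Homotopic K p q → Homotopic K q p
  | trans {p q r : List V} : Homotopic K p q → Homotopic K q r → Homotopic K p r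
  | collapse (p q : List V) (a b c : V) (h : ({a, b, c} : Finset V) ∈ K.faces) :
      Homotopic K (p ++ a :: b :: c :: q) (p ++ a :: c :: q)
  | dedup (p q : List V) (a : V) : Homotopic K (p ++ a :: a :: q) (p ++ a :: q)

/-- `K` is connected: any two vertices are joined by an edge path. -/
def SComplexConnected (K : SComplex V) : Prop :=
  ∀ u v : V, ({u} : Finset V) ∈ K.faces → ({v} : Finset V) ∈ K.faces →
    ∃ p : List V, IsEdgePath K p ∧ p.head? = some u ∧ p.getLast? = some v

/-- `K` is simply connected: connected, and every closed edge path is null-homotopic. -/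
def SimplyConnected (K : SComplex V) : Prop :=
  SComplexConnected K ∧
    ∀ (p : List V) (a : V), IsEdgePath K p → p.head? = some a → p.getLast? = some a →
      Homotopic K p [a]

end Paths

section OrderComplex

open Classical in
/-- The order complex of `L ∖ {⊥, ⊤}`: simplices are the nonempty chains avoiding
`⊥` and `⊤`. -/
noncomputable def orderComplex (L : Type*) [Lattice L] [BoundedOrder L] [Fintype L]
    [DecidableEq L] : SComplex L where
  faces := Finset.univ.filter fun σ : Finset L =>
    σ.Nonempty ∧ (∀ x ∈ σ, x ≠ ⊥ ∧ x ≠ ⊤) ∧ ∀ x ∈ σ, ∀ y ∈ σ, x ≤ y ∨ y ≤ x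
  nonempty_of_mem := fun σ hσ => (Finset.mem_filter.mp hσ).2.1
  down_closed := by
    intro σ hσ τ hτσ hτ
    rw [Finset.mem_filter] at hσ ⊢
    exact ⟨Finset.mem_univ _, hτ, fun x hx => hσ.2.2.1 x (hτσ hx),
      fun x hx y hy => hσ.2.2.2 x (hτσ hx) y (hτσ hy)⟩

end OrderComplex
section Building

variable (F : Type*) [Field F] [Fintype F]

noncomputable instance : Fintype (Submodule F (Fin 4 → F)) := by
  have : Finite (Submodule F (Fin 4 → F)) :=
    Finite.of_injective (fun N => (N : Set (Fin 4 → F))) SetLike.coe_injective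
  exact Fintype.ofFinite _

noncomputable instance : DecidableEq (Submodule F (Fin 4 → F)) := Classical.decEq _

/-- The spherical building `A₃(F_q)`: the order complex of the poset of nontrivial proper
linear subspaces of `F_q⁴`. -/
noncomputable def A3 : SComplex (Submodule F (Fin 4 → F)) :=
  orderComplex (Submodule F (Fin 4 → F))

end Building
section FixEdge

variable {G : Type*} [Group G]

open Classical in
/-- The value `fix(d₁φ(u,v₁,v₂))` for an unordered edge `e = {v₁,v₂}` of the link of `u`
(well defined for cochains, since `fix` is invariant under inversion and conjugation). -/
noncomputable def fixEdge (S : Type*) [Fintype S] [MulAction G S] (φ : V → V → G)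
    (u : V) (e : Finset V) : ℕ :=
  sSup {k : ℕ | ∃ v₁ ∈ e, ∃ v₂ ∈ e, v₁ ≠ v₂ ∧ k = fixCard G S (d1 φ u v₁ v₂)}

end FixEdge
section MainProofAux

open Classical Finset

variable {V : Type*} [DecidableEq V]

lemma SComplex.mem_simps_iff {X : SComplex V} {σ : Finset V} {k : ℕ} :
    σ ∈ X.simps k ↔ σ ∈ X.faces ∧ σ.card = k + 1 := Finset.mem_filter

lemma SComplex.weight_nonneg' (X : SComplex V) (σ : Finset V) : 0 ≤ X.weight σ := by
  unfold SComplex.weight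
  positivity

lemma SComplex.mem_lk_iff {X : SComplex V} {σ η : Finset V} :
    η ∈ (X.lk σ).faces ↔ η ∈ X.faces ∧ η ∪ σ ∈ X.faces ∧ Disjoint η σ := by
  simp [SComplex.lk, Finset.mem_filter]

lemma rank_eq_of_pure {X : SComplex V} {n : ℕ} (h : X.IsPureOfRank n) : X.rank = n := by
  obtain ⟨⟨σ₀, hσ₀⟩, hp⟩ := h
  refine le_antisymm (Finset.sup_le fun σ hσ => ?_) ?_
  · obtain ⟨τ, hτ, hsub, hc⟩ := hp σ hσ
    exact hc ▸ Finset.card_le_card hsub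
  · obtain ⟨τ, hτ, -, hc⟩ := hp σ₀ hσ₀
    exact le_trans (le_of_eq hc.symm) (Finset.le_sup hτ)

lemma erase_mem_lk {X : SComplex V} {τ : Finset V} (hτ : τ ∈ X.faces) {u : V}
    (hu : u ∈ τ) (hc : 2 ≤ τ.card) : τ.erase u ∈ (X.lk {u}).faces := by
  have hue : (τ.erase u) ∪ {u} = τ := by
    rw [Finset.union_comm, ← Finset.insert_eq, Finset.insert_erase hu]
  refine SComplex.mem_lk_iff.mpr ⟨X.down_closed τ hτ _ (Finset.erase_subset u τ) ?_,
    by rw [hue]; exact hτ, Finset.disjoint_singleton_right.mpr (Finset.notMem_erase u τ)⟩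
  rw [← Finset.card_pos, Finset.card_erase_of_mem hu]
  omega

lemma lk_pure {X : SComplex V} {n : ℕ} (hn : 2 ≤ n) (h : X.IsPureOfRank n)
    {u : V} (hu : ({u} : Finset V) ∈ X.faces) : (X.lk {u}).IsPureOfRank (n - 1) := by
  constructor
  · obtain ⟨τ, hτ, hsub, hc⟩ := h.2 _ hu
    exact ⟨τ.erase u, erase_mem_lk hτ (hsub (Finset.mem_singleton_self u)) (by omega)⟩
  · intro η hη
    obtain ⟨hη1, hη2, hη3⟩ := SComplex.mem_lk_iff.mp hη
    obtain ⟨τ, hτ, hsub, hc⟩ := h.2 _ hη2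
    have huτ : u ∈ τ := hsub (Finset.mem_union_right _ (Finset.mem_singleton_self u))
    refine ⟨τ.erase u, erase_mem_lk hτ huτ (by omega), ?_, ?_⟩
    · exact Finset.subset_erase.mpr ⟨(Finset.subset_union_left).trans hsub,
        Finset.disjoint_singleton_right.mp hη3⟩
    · rw [Finset.card_erase_of_mem huτ, hc]

lemma deg_pos {X : SComplex V} {n : ℕ} (hn : 1 ≤ n) (h : X.IsPureOfRank n)
    {σ : Finset V} (hσ : σ ∈ X.faces) :
    0 < ((X.simps (n - 1)).filter fun τ => σ ⊆ τ).card := by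
  obtain ⟨τ, hτ, hsub, hc⟩ := h.2 σ hσ
  exact Finset.card_pos.mpr ⟨τ, Finset.mem_filter.mpr
    ⟨SComplex.mem_simps_iff.mpr ⟨hτ, by omega⟩, hsub⟩⟩

lemma lk_card_filter {X : SComplex V} {n : ℕ} (hn : 3 ≤ n) (h : X.IsPureOfRank n)
    {u : V} (hu : ({u} : Finset V) ∈ X.faces) {a : Finset V} (ha : u ∉ a) :
    (((X.lk {u}).simps (n - 2)).filter fun η => a ⊆ η).card =
      ((X.simps (n - 1)).filter fun τ => a ∪ {u} ⊆ τ).card := by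
  have key : ∀ η : Finset V, u ∉ η → (η ∪ {u}).erase u = η := by
    intro η hη
    rw [Finset.erase_union_distrib, Finset.erase_singleton, Finset.union_empty,
      Finset.erase_eq_of_notMem hη]
  apply Finset.card_bij (fun η _ => η ∪ {u})
  · intro η hη
    obtain ⟨hη1, hη2⟩ := Finset.mem_filter.mp hη
    obtain ⟨hη3, hη4⟩ := SComplex.mem_simps_iff.mp hη1
    obtain ⟨hη5, hη6, hη7⟩ := SComplex.mem_lk_iff.mp hη3
    refine Finset.mem_filter.mpr ⟨SComplex.mem_simps_iff.mpr ⟨hη6, ?_⟩,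
      Finset.union_subset_union_left hη2⟩
    rw [Finset.card_union_of_disjoint hη7, hη4, Finset.card_singleton]
    omega
  · intro η₁ h₁ η₂ h₂ heq
    have u1 : u ∉ η₁ := Finset.disjoint_singleton_right.mp
      (SComplex.mem_lk_iff.mp (SComplex.mem_simps_iff.mp (Finset.mem_filter.mp h₁).1).1).2.2
    have u2 : u ∉ η₂ := Finset.disjoint_singleton_right.mp
      (SComplex.mem_lk_iff.mp (SComplex.mem_simps_iff.mp (Finset.mem_filter.mp h₂).1).1).2.2
    rw [← key η₁ u1, ← key η₂ u2, heq]
  · intro τ hτ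
    obtain ⟨hτ1, hτ2⟩ := Finset.mem_filter.mp hτ
    obtain ⟨hτ3, hτ4⟩ := SComplex.mem_simps_iff.mp hτ1
    have huτ : u ∈ τ := hτ2 (Finset.mem_union_right _ (Finset.mem_singleton_self u))
    have hue : (τ.erase u) ∪ {u} = τ := by
      rw [Finset.union_comm, ← Finset.insert_eq, Finset.insert_erase huτ]
    refine ⟨τ.erase u, Finset.mem_filter.mpr ⟨SComplex.mem_simps_iff.mpr
      ⟨erase_mem_lk hτ3 huτ (by omega), ?_⟩, ?_⟩, hue⟩
    · rw [Finset.card_erase_of_mem huτ]; omega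
    · exact Finset.subset_erase.mpr ⟨((Finset.subset_union_left).trans hτ2), ha⟩

end MainProofAux
section MainProofAux2

open Classical Finset

variable {V : Type*} [DecidableEq V]

lemma choose_id {n : ℕ} (hn : 3 ≤ n) : n * (n - 1).choose 2 = 3 * n.choose 3 := by
  have := Nat.add_one_mul_choose_eq (n - 1) 2
  have h1 : n - 1 + 1 = n := by omega
  rw [h1] at this
  norm_num at this
  omega

lemma weight_mul_lk {X : SComplex V} {n : ℕ} (hn : 3 ≤ n) (h : X.IsPureOfRank n)
    {τ : Finset V} (hτ : τ ∈ X.simps 2) {u : V} (hu : u ∈ τ) :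
    X.weight {u} * (X.lk {u}).weight (τ.erase u) = X.weight τ / 3 := by
  obtain ⟨hτf, hτc⟩ := SComplex.mem_simps_iff.mp hτ
  have hu1 : ({u} : Finset V) ∈ X.faces :=
    X.down_closed τ hτf {u} (Finset.singleton_subset_iff.mpr hu) ⟨u, Finset.mem_singleton_self u⟩
  have hlkrank : (X.lk {u}).rank = n - 1 := rank_eq_of_pure (lk_pure (by omega) h hu1)
  have hXrank : X.rank = n := rank_eq_of_pure h
  have hue : (τ.erase u) ∪ {u} = τ := by
    rw [Finset.union_comm, ← Finset.insert_eq, Finset.insert_erase hu]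
  have hec : (τ.erase u).card = 2 := by rw [Finset.card_erase_of_mem hu]; omega
  have hunotin : u ∉ τ.erase u := Finset.notMem_erase u τ
  -- the three counts
  have hnum : (((X.lk {u}).simps (n - 1 - 1)).filter fun η => τ.erase u ⊆ η).card =
      ((X.simps (n - 1)).filter fun σ => τ ⊆ σ).card := by
    have h1 : n - 1 - 1 = n - 2 := by omega
    rw [h1, lk_card_filter hn h hu1 hunotin, hue]
  have hden : (((X.lk {u}).simps (n - 1 - 1)).card) =
      ((X.simps (n - 1)).filter fun σ => ({u} : Finset V) ⊆ σ).card := by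
    have h1 : n - 1 - 1 = n - 2 := by omega
    have h2 := lk_card_filter (a := (∅ : Finset V)) hn h hu1 (Finset.notMem_empty u)
    rw [Finset.filter_true_of_mem (fun _ _ => Finset.empty_subset _),
      Finset.empty_union] at h2
    rw [h1, h2]
  have hd : 0 < ((X.simps (n - 1)).filter fun σ => ({u} : Finset V) ⊆ σ).card :=
    deg_pos (by omega) h hu1
  have hD : 0 < ((X.simps (n - 1)).filter fun σ => τ ⊆ σ).card :=
    deg_pos (by omega) h hτf
  have hF : 0 < (X.simps (n - 1)).card := by
    obtain ⟨σ, hσ⟩ := Finset.card_pos.mp hd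
    exact Finset.card_pos.mpr ⟨σ, (Finset.mem_filter.mp hσ).1⟩
  rw [SComplex.weight, SComplex.weight, SComplex.weight, hXrank, hlkrank, hnum, hden,
    Finset.card_singleton, hec, hτc]
  have hc1 : n.choose 1 = n := Nat.choose_one_right n
  rw [hc1, (by norm_num : (2:ℕ) + 1 = 3)]
  -- now pure arithmetic
  have hdR : (0:ℝ) < (((X.simps (n - 1)).filter fun σ => ({u} : Finset V) ⊆ σ).card : ℝ) := by
    exact_mod_cast hd
  have hFR : (0:ℝ) < ((X.simps (n - 1)).card : ℝ) := by exact_mod_cast hF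
  set F := ((X.simps (n - 1)).card : ℝ)
  set d := (((X.simps (n - 1)).filter fun σ => ({u} : Finset V) ⊆ σ).card : ℝ)
  set D := (((X.simps (n - 1)).filter fun σ => τ ⊆ σ).card : ℝ)
  have hC2 : (0:ℝ) < ((n-1).choose 2 : ℝ) := by
    exact_mod_cast Nat.choose_pos (by omega : 2 ≤ n - 1)
  have hC3 : (0:ℝ) < ((n).choose 3 : ℝ) := by
    exact_mod_cast Nat.choose_pos (by omega : 3 ≤ n)
  have hnR : (0:ℝ) < (n : ℝ) := by exact_mod_cast (by omega : 0 < n)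
  have hid : (n : ℝ) * ((n-1).choose 2 : ℝ) = 3 * (n.choose 3 : ℝ) := by
    exact_mod_cast choose_id hn
  field_simp
  linear_combination (-1 : ℝ) * D * hid

end MainProofAux2
section MainProofAux3

open Classical Finset

variable {V : Type*} [DecidableEq V]
variable {G : Type*} [Group G] {S : Type*} [Fintype S] [DecidableEq S] [MulAction G S]

omit [DecidableEq V] in
lemma d1_cyclic (φ : V → V → G) (a b c : V) :
    d1 φ b c a = (φ a b)⁻¹ * d1 φ a b c * (φ a b) := by
  simp [d1, mul_assoc]

omit [DecidableEq V] in
lemma d1_cyclic_ne_one {φ : V → V → G} {a b c : V} (h : d1 φ a b c ≠ 1) :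
    d1 φ b c a ≠ 1 := by
  rw [d1_cyclic]
  intro hc
  apply h
  have := congrArg (fun x => (φ a b) * x * (φ a b)⁻¹) hc
  simpa [mul_assoc] using this

lemma card3_ne {a b c : V} (h : ({a, b, c} : Finset V).card = 3) :
    a ≠ b ∧ a ≠ c ∧ b ≠ c := by
  have key : ∀ x y : V, ({a, b, c} : Finset V) ⊆ {x, y} → False := by
    intro x y hsub
    have h2 := Finset.card_le_card hsub
    have h3 : ({x, y} : Finset V).card ≤ 2 :=
      le_trans (Finset.card_insert_le _ _) (by simp)
    omega
  refine ⟨?_, ?_, ?_⟩ <;> rintro rfl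
  · exact key a c (by intro z hz; simp at hz ⊢; tauto)
  · exact key a b (by intro z hz; simp at hz ⊢; tauto)
  · exact key a b (by intro z hz; simp at hz ⊢; tauto)

omit [DecidableEq V] in
lemma fixCard_le_FixG (G : Type*) [Group G] (S : Type*) [Fintype S] [MulAction G S]
    {g : G} (hg : g ≠ 1) : fixCard G S g ≤ FixG G S := by
  apply le_csSup
  · refine ⟨Fintype.card S, ?_⟩
    rintro k ⟨g', -, rfl⟩
    exact le_trans (Finset.card_filter_le _ _) (le_of_eq (Finset.card_univ))
  · exact ⟨g, hg, rfl⟩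

variable [Fintype V]

lemma mem_Ycomplex_iff {X : SComplex V} {φ : V → V → G} {σ : Finset (V × S)} :
    σ ∈ (Ycomplex X φ S).faces ↔ σ.image Prod.fst ∈ X.faces ∧
      (σ.image Prod.fst).card = σ.card ∧
      ∀ p ∈ σ, ∀ q ∈ σ, p.1 ≠ q.1 → p.2 = φ p.1 q.1 • q.2 := by
  simp [Ycomplex, Finset.mem_filter]

lemma singleton_mem_Ycomplex_iff {X : SComplex V} {φ : V → V → G} {p : V × S} :
    ({p} : Finset (V × S)) ∈ (Ycomplex X φ S).faces ↔ ({p.1} : Finset V) ∈ X.faces := by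
  rw [mem_Ycomplex_iff]
  constructor
  · intro h
    simpa using h.1
  · intro h
    refine ⟨by simpa using h, by simp, ?_⟩
    intro x hx y hy hxy
    rw [Finset.mem_singleton] at hx hy
    subst hx
    subst hy
    exact absurd rfl hxy

lemma mem_Dset_of_not_fixed {X : SComplex V} {φ : V → V → G} (hφ : IsCochain G φ)
    {u v w : V} {s : S} {e : Finset V} (he : e ∈ (X.lk {u}).simps 1)
    (hevw : e = {v, w}) (hs : d1 φ u v w • s ≠ s) :
    e ∈ Dset (Ycomplex X φ S) X Prod.fst (u, s) := by
  have hef : e ∈ (X.lk {u}).faces := (SComplex.mem_simps_iff.mp he).1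
  have hec : e.card = 2 := (SComplex.mem_simps_iff.mp he).2
  have hu_not : u ∉ e := Finset.disjoint_singleton_right.mp (SComplex.mem_lk_iff.mp hef).2.2
  have hvw : v ≠ w := by
    rintro rfl
    have hsub : e ⊆ {v} := by rw [hevw]; intro z hz; simp at hz ⊢; tauto
    have h2 := Finset.card_le_card hsub
    rw [hec, Finset.card_singleton] at h2
    omega
  have hv : v ∈ e := by rw [hevw]; simp
  have hw : w ∈ e := by rw [hevw]; simp
  have hvu : v ≠ u := fun hh => hu_not (hh ▸ hv)
  have hwu : w ≠ u := fun hh => hu_not (hh ▸ hw)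
  unfold Dset
  rw [Finset.mem_filter]
  refine ⟨he, ?_⟩
  rintro ⟨η, hη, hηe⟩
  obtain ⟨hηY, hσY, hdisj⟩ := SComplex.mem_lk_iff.mp hη
  obtain ⟨h1, h2, h3⟩ := mem_Ycomplex_iff.mp hσY
  have hvη : v ∈ η.image Prod.fst := hηe ▸ hv
  have hwη : w ∈ η.image Prod.fst := hηe ▸ hw
  obtain ⟨pv, hvt, hv1⟩ := Finset.mem_image.mp hvη
  obtain ⟨pw, hwt, hw1⟩ := Finset.mem_image.mp hwη
  have hvσ : pv ∈ η ∪ {(u, s)} := Finset.mem_union_left _ hvt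
  have hwσ : pw ∈ η ∪ {(u, s)} := Finset.mem_union_left _ hwt
  have huσ : (u, s) ∈ η ∪ {(u, s)} :=
    Finset.mem_union_right _ (Finset.mem_singleton_self _)
  have e1 : pv.2 = φ pv.1 u • s := h3 pv hvσ (u, s) huσ (by rw [hv1]; exact hvu)
  have e2 : pw.2 = φ pw.1 u • s := h3 pw hwσ (u, s) huσ (by rw [hw1]; exact hwu)
  have e3 : pv.2 = φ pv.1 pw.1 • pw.2 := h3 pv hvσ pw hwσ (by rw [hv1, hw1]; exact hvw)
  rw [hv1] at e1 e3
  rw [hw1] at e2 e3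
  apply hs
  have heq : φ v u • s = φ v w • φ w u • s := by rw [← e2, ← e3, e1]
  have h4 : s = (φ v u)⁻¹ • (φ v w • φ w u • s) := by
    rw [← heq, inv_smul_smul]
  rw [← hφ u v] at h4
  calc d1 φ u v w • s = φ u v • φ v w • φ w u • s := by
        simp [d1, mul_smul]
    _ = s := h4.symm

lemma Yverts_fiber {X : SComplex V} {φ : V → V → G} {u : V}
    (hu : ({u} : Finset V) ∈ X.faces) :
    ((Ycomplex X φ S).verts.filter fun p => p.1 = u) =
      Finset.univ.image fun s : S => (u, s) := by
  ext ⟨v, t⟩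
  simp only [Finset.mem_filter, Finset.mem_image, Finset.mem_univ, true_and,
    SComplex.verts, singleton_mem_Ycomplex_iff]
  constructor
  · rintro ⟨-, rfl⟩
    exact ⟨t, rfl⟩
  · rintro ⟨s, hs⟩
    rw [Prod.mk.injEq] at hs
    obtain ⟨rfl, rfl⟩ := hs
    exact ⟨hu, rfl⟩

lemma erase_pair_b {a b c : V} (hab : a ≠ b) (hbc : b ≠ c) :
    ({a, b, c} : Finset V).erase b = {c, a} := by
  ext x
  simp only [Finset.mem_erase, Finset.mem_insert, Finset.mem_singleton]
  constructor
  · rintro ⟨hxb, rfl | rfl | rfl⟩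
    · exact Or.inr rfl
    · exact absurd rfl hxb
    · exact Or.inl rfl
  · rintro (rfl | rfl)
    · exact ⟨Ne.symm hbc, Or.inr (Or.inr rfl)⟩
    · exact ⟨hab, Or.inl rfl⟩

lemma erase_pair_c {a b c : V} (hac : a ≠ c) (hbc : b ≠ c) :
    ({a, b, c} : Finset V).erase c = {a, b} := by
  ext x
  simp only [Finset.mem_erase, Finset.mem_insert, Finset.mem_singleton]
  constructor
  · rintro ⟨hxc, rfl | rfl | rfl⟩
    · exact Or.inl rfl
    · exact Or.inr rfl
    · exact absurd rfl hxc
  · rintro (rfl | rfl)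
    · exact ⟨hac, Or.inl rfl⟩
    · exact ⟨hbc, Or.inr (Or.inl rfl)⟩

end MainProofAux3
/-- the deficiency of `Y_φ` is at least `((|S|-Fix_G(S))/|S|)·‖d₁φ‖`. -/
theorem normD1_le_deficiency
    {V : Type*} [Fintype V] [DecidableEq V]
    {G : Type*} [Group G] {S : Type*} [Fintype S] [DecidableEq S] [Nonempty S]
    [MulAction G S]
    (X : SComplex V) (n : ℕ) (hn : 3 ≤ n) (hpure : X.IsPureOfRank n)
    (φ : V → V → G) (hφ : IsCochain G φ) :
    (((Fintype.card S : ℝ) - FixG G S) / Fintype.card S) * normD1 X φ ≤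
      deficiency (Ycomplex X φ S) X Prod.fst := by
  classical
  have hScard : (0:ℝ) < (Fintype.card S : ℝ) := by exact_mod_cast Fintype.card_pos
  set Bad : Finset (Finset V) := (X.simps 2).filter
      (fun τ => ∃ u v w, τ = {u, v, w} ∧ d1 φ u v w ≠ 1) with hBadDef
  have hnorm : normD1 X φ = ∑ τ ∈ Bad, X.weight τ := by
    rw [normD1, hBadDef]
    exact Finset.sum_congr (Finset.filter_congr_decidable _ _ _) fun _ _ => rfl
  set B : V → Finset (Finset V) := fun u => ((X.lk {u}).simps 1).filter
      (fun e => ∃ v w, e = {v, w} ∧ d1 φ u v w ≠ 1) with hBDef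
  have hvertmem : ∀ u ∈ X.verts, ({u} : Finset V) ∈ X.faces := by
    intro u hu
    exact (Finset.mem_filter.mp hu).2
  -- rewrite deficiency as a sum over S
  have hinj : ∀ u : V, Function.Injective (fun s : S => (u, s)) := by
    intro u s t h
    simpa using h
  have hdef : deficiency (Ycomplex X φ S) X Prod.fst =
      ∑ u ∈ X.verts, (X.weight {u} / (Fintype.card S : ℝ)) *
        ∑ s : S, locDef (Ycomplex X φ S) X Prod.fst (u, s) := by
    rw [deficiency]
    refine Finset.sum_congr rfl fun u hu => ?_
    rw [Yverts_fiber (hvertmem u hu),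
      Finset.card_image_of_injective _ (hinj u), Finset.card_univ,
      Finset.sum_image (fun s _ t _ h => hinj u h)]
  -- per (u,s) bound via Dset
  have hstep_s : ∀ u ∈ X.verts, ∀ s : S,
      ∑ e ∈ (B u).filter (fun e => ∃ v w, e = {v, w} ∧ d1 φ u v w • s ≠ s),
        (X.lk {u}).weight e ≤ locDef (Ycomplex X φ S) X Prod.fst (u, s) := by
    intro u hu s
    rw [locDef]
    refine Finset.sum_le_sum_of_subset_of_nonneg ?_ ?_
    · intro e he
      have h' := Finset.mem_filter.mp he
      obtain ⟨v, w, hevw, hsne⟩ := h'.2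
      have he1 : e ∈ (X.lk {u}).simps 1 := by
        have := Finset.mem_filter.mp (hBDef ▸ h'.1)
        exact this.1
      exact mem_Dset_of_not_fixed hφ he1 hevw hsne
    · intro e _ _
      exact SComplex.weight_nonneg' _ e
  -- counting bound
  have hcount : ∀ u : V, ∀ e ∈ B u,
      ((Fintype.card S : ℝ) - FixG G S) ≤
        ((Finset.univ.filter fun s : S =>
          ∃ v w, e = {v, w} ∧ d1 φ u v w • s ≠ s).card : ℝ) := by
    intro u e he
    have h' := Finset.mem_filter.mp (hBDef ▸ he)
    obtain ⟨v, w, hevw, hne⟩ := h'.2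
    have hsub : (Finset.univ.filter fun s : S => ¬ d1 φ u v w • s = s) ⊆
        (Finset.univ.filter fun s : S => ∃ v' w', e = {v', w'} ∧ d1 φ u v' w' • s ≠ s) := by
      intro s hs
      rw [Finset.mem_filter] at hs ⊢
      exact ⟨hs.1, v, w, hevw, hs.2⟩
    have hsum : (Finset.univ.filter fun s : S => d1 φ u v w • s = s).card +
        (Finset.univ.filter fun s : S => ¬ d1 φ u v w • s = s).card = Fintype.card S := by
      rw [Finset.card_filter_add_card_filter_not, Finset.card_univ]
    have hfix : (Finset.univ.filter fun s : S => d1 φ u v w • s = s).card ≤ FixG G S := by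
      have h1 : fixCard G S (d1 φ u v w) ≤ FixG G S := fixCard_le_FixG G S hne
      have h2 : fixCard G S (d1 φ u v w) =
          (Finset.univ.filter fun s : S => d1 φ u v w • s = s).card := by
        rw [fixCard]
        exact congrArg Finset.card (Finset.filter_congr_decidable _ _ _)
      omega
    have hle2 : (Finset.univ.filter fun s : S => ¬ d1 φ u v w • s = s).card ≤
        (Finset.univ.filter fun s : S =>
          ∃ v' w', e = {v', w'} ∧ d1 φ u v' w' • s ≠ s).card := Finset.card_le_card hsub
    have c1 : ((Finset.univ.filter fun s : S => d1 φ u v w • s = s).card : ℝ) +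
        ((Finset.univ.filter fun s : S => ¬ d1 φ u v w • s = s).card : ℝ)
        = Fintype.card S := by exact_mod_cast hsum
    have c2 : ((Finset.univ.filter fun s : S => d1 φ u v w • s = s).card : ℝ) ≤ FixG G S := by
      exact_mod_cast hfix
    have c3 : ((Finset.univ.filter fun s : S => ¬ d1 φ u v w • s = s).card : ℝ) ≤
        ((Finset.univ.filter fun s : S =>
          ∃ v' w', e = {v', w'} ∧ d1 φ u v' w' • s ≠ s).card : ℝ) := by exact_mod_cast hle2
    linarith
  -- swap sums
  have hswap : ∀ u : V,
      ∑ s : S, ∑ e ∈ (B u).filter (fun e => ∃ v w, e = {v, w} ∧ d1 φ u v w • s ≠ s),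
        (X.lk {u}).weight e
      = ∑ e ∈ B u, ((Finset.univ.filter fun s : S =>
          ∃ v w, e = {v, w} ∧ d1 φ u v w • s ≠ s).card : ℝ) * (X.lk {u}).weight e := by
    intro u
    calc ∑ s : S, ∑ e ∈ (B u).filter (fun e => ∃ v w, e = {v, w} ∧ d1 φ u v w • s ≠ s),
          (X.lk {u}).weight e
        = ∑ s : S, ∑ e ∈ B u, if (∃ v w, e = {v, w} ∧ d1 φ u v w • s ≠ s)
            then (X.lk {u}).weight e else 0 :=
          Finset.sum_congr rfl fun s _ => Finset.sum_filter _ _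
      _ = ∑ e ∈ B u, ∑ s : S, if (∃ v w, e = {v, w} ∧ d1 φ u v w • s ≠ s)
            then (X.lk {u}).weight e else 0 := Finset.sum_comm
      _ = _ := by
          refine Finset.sum_congr rfl fun e _ => ?_
          rw [← Finset.sum_filter, Finset.sum_const, nsmul_eq_mul]
  -- double counting
  have hstep5 : ∑ u ∈ X.verts, ∑ e ∈ B u, X.weight {u} * (X.lk {u}).weight e
      = ∑ τ ∈ Bad, X.weight τ := by
    have hinner : ∀ u ∈ X.verts, ∑ e ∈ B u, X.weight {u} * (X.lk {u}).weight e
        = ∑ τ ∈ Bad.filter (fun τ => u ∈ τ), X.weight τ / 3 := by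
      intro u hu
      refine Finset.sum_nbij' (fun e => insert u e) (fun τ => τ.erase u) ?_ ?_ ?_ ?_ ?_
      · intro e he
        have h' := Finset.mem_filter.mp (hBDef ▸ he)
        obtain ⟨he1, he2⟩ := Finset.mem_filter.mp h'.1
        obtain ⟨v, w, hevw, hne⟩ := h'.2
        obtain ⟨hef, heu, hdisj⟩ := SComplex.mem_lk_iff.mp he1
        have hunote : u ∉ e := Finset.disjoint_singleton_right.mp hdisj
        have hins : insert u e = e ∪ {u} := by
          rw [Finset.union_comm, ← Finset.insert_eq]
        rw [Finset.mem_filter, hBadDef, Finset.mem_filter]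
        refine ⟨⟨SComplex.mem_simps_iff.mpr ⟨by rw [hins]; exact heu, ?_⟩, u, v, w, ?_, hne⟩,
          Finset.mem_insert_self u e⟩
        · rw [Finset.card_insert_of_notMem hunote, he2]
        · rw [hevw]
      · intro τ hτ
        obtain ⟨htBad, huτ⟩ := Finset.mem_filter.mp hτ
        have h' := Finset.mem_filter.mp (hBadDef ▸ htBad)
        obtain ⟨hτf, hτc⟩ := SComplex.mem_simps_iff.mp h'.1
        obtain ⟨a, b, c, hτabc, hne⟩ := h'.2
        have hc3 : ({a, b, c} : Finset V).card = 3 := by rw [← hτabc, hτc]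
        obtain ⟨hab, hac, hbc⟩ := card3_ne hc3
        have hlk : τ.erase u ∈ (X.lk {u}).faces := erase_mem_lk hτf huτ (by omega)
        have hcard2 : (τ.erase u).card = 2 := by
          rw [Finset.card_erase_of_mem huτ, hτc]
        rw [hBDef, Finset.mem_filter]
        refine ⟨SComplex.mem_simps_iff.mpr ⟨hlk, hcard2⟩, ?_⟩
        have humem : u ∈ ({a, b, c} : Finset V) := hτabc ▸ huτ
        simp only [Finset.mem_insert, Finset.mem_singleton] at humem
        rcases humem with rfl | rfl | rfl
        · refine ⟨b, c, ?_, hne⟩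
          rw [hτabc, Finset.erase_insert (by simp [hab, hac])]
        · refine ⟨c, a, ?_, d1_cyclic_ne_one hne⟩
          rw [hτabc, erase_pair_b hab hbc]
        · refine ⟨a, b, ?_, d1_cyclic_ne_one (d1_cyclic_ne_one hne)⟩
          rw [hτabc, erase_pair_c hac hbc]
      · intro e he
        have h' := Finset.mem_filter.mp (hBDef ▸ he)
        have he1 := (SComplex.mem_simps_iff.mp h'.1).1
        have hunote : u ∉ e :=
          Finset.disjoint_singleton_right.mp (SComplex.mem_lk_iff.mp he1).2.2
        exact Finset.erase_insert hunote
      · intro τ hτ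
        exact Finset.insert_erase (Finset.mem_filter.mp hτ).2
      · intro e he
        have h' := Finset.mem_filter.mp (hBDef ▸ he)
        obtain ⟨he1, he2⟩ := Finset.mem_filter.mp h'.1
        obtain ⟨hef, heu, hdisj⟩ := SComplex.mem_lk_iff.mp he1
        have hunote : u ∉ e := Finset.disjoint_singleton_right.mp hdisj
        have hins : insert u e = e ∪ {u} := by
          rw [Finset.union_comm, ← Finset.insert_eq]
        have hmem2 : insert u e ∈ X.simps 2 := SComplex.mem_simps_iff.mpr
          ⟨by rw [hins]; exact heu, by rw [Finset.card_insert_of_notMem hunote, he2]⟩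
        have hid := weight_mul_lk hn hpure hmem2 (Finset.mem_insert_self u e)
        rw [Finset.erase_insert hunote] at hid
        exact hid
    calc ∑ u ∈ X.verts, ∑ e ∈ B u, X.weight {u} * (X.lk {u}).weight e
        = ∑ u ∈ X.verts, ∑ τ ∈ Bad.filter (fun τ => u ∈ τ), X.weight τ / 3 :=
          Finset.sum_congr rfl hinner
      _ = ∑ u ∈ X.verts, ∑ τ ∈ Bad, if u ∈ τ then X.weight τ / 3 else 0 :=
          Finset.sum_congr rfl fun u _ => Finset.sum_filter _ _
      _ = ∑ τ ∈ Bad, ∑ u ∈ X.verts, if u ∈ τ then X.weight τ / 3 else 0 := Finset.sum_comm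
      _ = ∑ τ ∈ Bad, X.weight τ := by
          refine Finset.sum_congr rfl fun τ hτ => ?_
          have h' := Finset.mem_filter.mp (hBadDef ▸ hτ)
          obtain ⟨hτf, hτc⟩ := SComplex.mem_simps_iff.mp h'.1
          have hfil : X.verts.filter (fun u => u ∈ τ) = τ := by
            ext x
            simp only [Finset.mem_filter, SComplex.verts, Finset.mem_univ, true_and]
            exact ⟨And.right, fun hx => ⟨X.down_closed τ hτf {x}
              (Finset.singleton_subset_iff.mpr hx) ⟨x, Finset.mem_singleton_self x⟩, hx⟩⟩
          rw [← Finset.sum_filter, hfil, Finset.sum_const, hτc, nsmul_eq_mul]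
          push_cast
          ring
  -- per-u key inequality
  have key : ∀ u ∈ X.verts,
      (((Fintype.card S : ℝ) - FixG G S) / Fintype.card S) *
        (∑ e ∈ B u, X.weight {u} * (X.lk {u}).weight e)
      ≤ (X.weight {u} / (Fintype.card S : ℝ)) *
        ∑ s : S, locDef (Ycomplex X φ S) X Prod.fst (u, s) := by
    intro u hu
    have hw0 : 0 ≤ X.weight {u} / (Fintype.card S : ℝ) :=
      div_nonneg (SComplex.weight_nonneg' X {u}) (le_of_lt hScard)
    have t1 : ∑ e ∈ B u, (((Fintype.card S : ℝ) - FixG G S) * (X.lk {u}).weight e)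
        ≤ ∑ e ∈ B u, ((Finset.univ.filter fun s : S =>
            ∃ v w, e = {v, w} ∧ d1 φ u v w • s ≠ s).card : ℝ) * (X.lk {u}).weight e :=
      Finset.sum_le_sum fun e he =>
        mul_le_mul_of_nonneg_right (hcount u e he) (SComplex.weight_nonneg' _ e)
    have t3 : ∑ s : S, ∑ e ∈ (B u).filter
          (fun e => ∃ v w, e = {v, w} ∧ d1 φ u v w • s ≠ s), (X.lk {u}).weight e
        ≤ ∑ s : S, locDef (Ycomplex X φ S) X Prod.fst (u, s) :=
      Finset.sum_le_sum fun s _ => hstep_s u hu s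
    calc (((Fintype.card S : ℝ) - FixG G S) / Fintype.card S) *
          (∑ e ∈ B u, X.weight {u} * (X.lk {u}).weight e)
        = (X.weight {u} / (Fintype.card S : ℝ)) *
          ∑ e ∈ B u, (((Fintype.card S : ℝ) - FixG G S) * (X.lk {u}).weight e) := by
          rw [Finset.mul_sum, Finset.mul_sum]
          refine Finset.sum_congr rfl fun e _ => ?_
          ring
      _ ≤ (X.weight {u} / (Fintype.card S : ℝ)) *
          ∑ e ∈ B u, ((Finset.univ.filter fun s : S =>
            ∃ v w, e = {v, w} ∧ d1 φ u v w • s ≠ s).card : ℝ) * (X.lk {u}).weight e :=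
          mul_le_mul_of_nonneg_left t1 hw0
      _ = (X.weight {u} / (Fintype.card S : ℝ)) *
          ∑ s : S, ∑ e ∈ (B u).filter
            (fun e => ∃ v w, e = {v, w} ∧ d1 φ u v w • s ≠ s), (X.lk {u}).weight e := by
          rw [hswap u]
      _ ≤ _ := mul_le_mul_of_nonneg_left t3 hw0
  rw [hdef, hnorm, ← hstep5, Finset.mul_sum]
  exact Finset.sum_le_sum key
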